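/- Under the Kropina change with h-vector and with b tangent to the hypersurface (bⱼNʲ = 0, hence mⱼNʲ = 0 where mᵢ = bᵢ − (1/τ)lᵢ), the transvection of the transformed Cartan tensor gives *Cᵢⱼₖ Bⁱ_α Bʲ_β Nᵏ = (2τ² − ρτ³) Cᵢⱼₖ Bⁱ_α Bʲ_β Nᵏ. Consequently the second fundamental v-tensors satisfy *M_{αβ} = √(2τ² − ρτ³) · M_{αβ}. -/
import Mathlib


open scoped BigOperators

/-- With `b` tangent to the hypersurface (`bⱼNʲ = 0`, hence `mⱼNʲ = 0`),
the transvection of the transformed Cartan tensor gives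
`*Cᵢⱼₖ Bⁱ_α Bʲ_β Nᵏ = (2τ² − ρτ³) Cᵢⱼₖ Bⁱ_α Bʲ_β Nᵏ`, and consequently
`*M_{αβ} = √(2τ² − ρτ³) M_{αβ}` for the second fundamental v-tensors. -/
theorem kropina_second_fundamental_v_tensor
    {n m : ℕ}
    (C Cstar : Fin n → Fin n → Fin n → ℝ)
    (h : Fin n → Fin n → ℝ)
    (mv bb l N : Fin n → ℝ) (B : Fin m → Fin n → ℝ)
    (τ ρ β : ℝ)
    (hCstar : ∀ i j k, Cstar i j k =
      (2 * τ ^ 2 - ρ * τ ^ 3) * C i j k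
        - (τ ^ 2 / (2 * β)) * (4 - 3 * ρ * τ)
            * (h i j * mv k + h j k * mv i + h k i * mv j)
        - (6 * τ ^ 2 / β) * mv i * mv j * mv k)
    (hhBN : ∀ α, (∑ i, ∑ j, h i j * B α i * N j) = 0)
    (hhsym : ∀ i j, h i j = h j i)
    (hmN : (∑ j, mv j * N j) = 0)
    (hpos : 0 < 2 * τ ^ 2 - ρ * τ ^ 3)
    (Nstar : Fin n → ℝ)
    (hNstar : ∀ k, Nstar k = N k / Real.sqrt (2 * τ ^ 2 - ρ * τ ^ 3))
    (M Mstar : Fin m → Fin m → ℝ)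
    (hM : ∀ α γ, M α γ = ∑ i, ∑ j, ∑ k, C i j k * B α i * B γ j * N k)
    (hMstar : ∀ α γ, Mstar α γ = ∑ i, ∑ j, ∑ k, Cstar i j k * B α i * B γ j * Nstar k) :
    (∀ α γ, (∑ i, ∑ j, ∑ k, Cstar i j k * B α i * B γ j * N k) =
        (2 * τ ^ 2 - ρ * τ ^ 3) * ∑ i, ∑ j, ∑ k, C i j k * B α i * B γ j * N k) ∧
      (∀ α γ, Mstar α γ = Real.sqrt (2 * τ ^ 2 - ρ * τ ^ 3) * M α γ) := by
  have key : ∀ α γ, (∑ i, ∑ j, ∑ k, Cstar i j k * B α i * B γ j * N k)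
      = (2 * τ ^ 2 - ρ * τ ^ 3) * ∑ i, ∑ j, ∑ k, C i j k * B α i * B γ j * N k := by
    intro α γ
    have hT1 : (∑ i, ∑ j, ∑ k, h i j * mv k * B α i * B γ j * N k) = 0 := by
      refine Finset.sum_eq_zero fun i _ => Finset.sum_eq_zero fun j _ => ?_
      have : (∑ k, h i j * mv k * B α i * B γ j * N k)
          = (h i j * B α i * B γ j) * ∑ k, mv k * N k := by
        rw [Finset.mul_sum]
        exact Finset.sum_congr rfl fun k _ => by ring
      rw [this, hmN, mul_zero]
    have hT2 : (∑ i, ∑ j, ∑ k, h j k * mv i * B α i * B γ j * N k) = 0 := by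
      refine Finset.sum_eq_zero fun i _ => ?_
      have : (∑ j, ∑ k, h j k * mv i * B α i * B γ j * N k)
          = (mv i * B α i) * ∑ j, ∑ k, h j k * B γ j * N k := by
        rw [Finset.mul_sum]
        refine Finset.sum_congr rfl fun j _ => ?_
        rw [Finset.mul_sum]
        exact Finset.sum_congr rfl fun k _ => by ring
      rw [this, hhBN γ, mul_zero]
    have hT3 : (∑ i, ∑ j, ∑ k, h k i * mv j * B α i * B γ j * N k) = 0 := by
      rw [Finset.sum_comm]
      refine Finset.sum_eq_zero fun j _ => ?_
      have : (∑ i, ∑ k, h k i * mv j * B α i * B γ j * N k)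
          = (mv j * B γ j) * ∑ i, ∑ k, h i k * B α i * N k := by
        rw [Finset.mul_sum]
        refine Finset.sum_congr rfl fun i _ => ?_
        rw [Finset.mul_sum]
        refine Finset.sum_congr rfl fun k _ => ?_
        rw [hhsym k i]; ring
      rw [this, hhBN α, mul_zero]
    have hT4 : (∑ i, ∑ j, ∑ k, mv i * mv j * mv k * B α i * B γ j * N k) = 0 := by
      refine Finset.sum_eq_zero fun i _ => Finset.sum_eq_zero fun j _ => ?_
      have : (∑ k, mv i * mv j * mv k * B α i * B γ j * N k)
          = (mv i * mv j * B α i * B γ j) * ∑ k, mv k * N k := by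
        rw [Finset.mul_sum]
        exact Finset.sum_congr rfl fun k _ => by ring
      rw [this, hmN, mul_zero]
    have expand : (∑ i, ∑ j, ∑ k, Cstar i j k * B α i * B γ j * N k)
        = (2 * τ ^ 2 - ρ * τ ^ 3) * (∑ i, ∑ j, ∑ k, C i j k * B α i * B γ j * N k)
          - (τ ^ 2 / (2 * β)) * (4 - 3 * ρ * τ)
              * ((∑ i, ∑ j, ∑ k, h i j * mv k * B α i * B γ j * N k)
                + (∑ i, ∑ j, ∑ k, h j k * mv i * B α i * B γ j * N k)
                + (∑ i, ∑ j, ∑ k, h k i * mv j * B α i * B γ j * N k))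
          - (6 * τ ^ 2 / β)
              * (∑ i, ∑ j, ∑ k, mv i * mv j * mv k * B α i * B γ j * N k) := by
      simp only [Finset.mul_sum, ← Finset.sum_sub_distrib, ← Finset.sum_add_distrib]
      refine Finset.sum_congr rfl fun i _ => Finset.sum_congr rfl fun j _ =>
        Finset.sum_congr rfl fun k _ => ?_
      rw [hCstar]; ring
    rw [expand, hT1, hT2, hT3, hT4]
    ring
  refine ⟨key, fun α γ => ?_⟩
  have hsq : Real.sqrt (2 * τ ^ 2 - ρ * τ ^ 3) * Real.sqrt (2 * τ ^ 2 - ρ * τ ^ 3)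
      = 2 * τ ^ 2 - ρ * τ ^ 3 := Real.mul_self_sqrt hpos.le
  have hsqpos : 0 < Real.sqrt (2 * τ ^ 2 - ρ * τ ^ 3) := Real.sqrt_pos.mpr hpos
  have hstep : (∑ i, ∑ j, ∑ k, Cstar i j k * B α i * B γ j * Nstar k)
      = (∑ i, ∑ j, ∑ k, Cstar i j k * B α i * B γ j * N k)
          / Real.sqrt (2 * τ ^ 2 - ρ * τ ^ 3) := by
    rw [Finset.sum_div]
    refine Finset.sum_congr rfl fun i _ => ?_
    rw [Finset.sum_div]
    refine Finset.sum_congr rfl fun j _ => ?_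
    rw [Finset.sum_div]
    refine Finset.sum_congr rfl fun k _ => ?_
    rw [hNstar]; ring
  rw [hMstar, hstep, key, hM]
  rw [div_eq_iff hsqpos.ne', mul_comm (Real.sqrt _), mul_assoc, hsq, mul_comm]
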